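/- Let S, Ŝ, W be symmetric positive definite n×n real matrices satisfying S ≤ C·Ŝ, S ≤ D·W, and e·W ≤ Ŝ with positive constants C, D, e. For γ ≥ 0, define S_γ := (S⁻¹ + γW⁻¹)⁻¹ and Ŝ_γ := (Ŝ⁻¹ + γW⁻¹)⁻¹. Then every eigenvalue λ of Ŝ_γ⁻¹ S_γ satisfies λ ≤ C/(1 + γ·C·e) + γ·D/(1 + γ·D). -/

import Mathlib

open Matrix

/-- Sum of a positive definite and a positive semidefinite matrix is positive definite. -/
lemma aux_posdef_add {n : ℕ} {A B : Matrix (Fin n) (Fin n) ℝ}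
    (hA : A.PosDef) (hB : B.PosSemidef) : (A + B).PosDef := by
  refine Matrix.PosDef.of_dotProduct_mulVec_pos (hA.1.add hB.1) (fun x hx => ?_)
  have h1 := hA.dotProduct_mulVec_pos hx
  have h2 := hB.dotProduct_mulVec_nonneg x
  simp only [add_mulVec, dotProduct_add] at *
  linarith

/-- Nonnegative scalar multiple of a positive semidefinite matrix. -/
lemma aux_psd_smul {n : ℕ} {A : Matrix (Fin n) (Fin n) ℝ} (hA : A.PosSemidef)
    {c : ℝ} (hc : 0 ≤ c) : (c • A).PosSemidef := by
  refine Matrix.PosSemidef.of_dotProduct_mulVec_nonneg ?_ (fun x => ?_)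
  · have := hA.1
    simpa [Matrix.IsHermitian, conjTranspose_smul] using congrArg (c • ·) this
  · have := hA.dotProduct_mulVec_nonneg x
    simp only [smul_mulVec, dotProduct_smul, smul_eq_mul]
    exact mul_nonneg hc this

/-- Positive scalar multiple of a positive definite matrix. -/
lemma aux_pd_smul {n : ℕ} {A : Matrix (Fin n) (Fin n) ℝ} (hA : A.PosDef)
    {c : ℝ} (hc : 0 < c) : (c • A).PosDef := by
  refine Matrix.PosDef.of_dotProduct_mulVec_pos ?_ (fun x hx => ?_)
  · have := hA.1
    simpa [Matrix.IsHermitian, conjTranspose_smul] using congrArg (c • ·) this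
  · have := hA.dotProduct_mulVec_pos hx
    simp only [smul_mulVec, dotProduct_smul, smul_eq_mul]
    exact mul_pos hc this

/-- symmetry of quadratic pairing for a hermitian real matrix -/
lemma aux_dot_symm {n : ℕ} {A : Matrix (Fin n) (Fin n) ℝ} (hA : A.IsHermitian)
    (u v : Fin n → ℝ) : u ⬝ᵥ A.mulVec v = v ⬝ᵥ A.mulVec u := by
  have hAt : Aᵀ = A := by
    have := hA
    simpa [Matrix.IsHermitian, conjTranspose_eq_transpose_of_trivial] using this
  rw [dotProduct_mulVec, ← Matrix.mulVec_transpose, hAt, dotProduct_comm]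

/-- Loewner-order reversal on quadratic forms: if `A ≤ B` then `B⁻¹ ≤ A⁻¹`. -/
lemma aux_inv_quad_le {n : ℕ} (A B : Matrix (Fin n) (Fin n) ℝ) (hA : A.PosDef) (hB : B.PosDef)
    (h : ∀ x, x ⬝ᵥ A.mulVec x ≤ x ⬝ᵥ B.mulVec x) (z : Fin n → ℝ) :
    z ⬝ᵥ B⁻¹.mulVec z ≤ z ⬝ᵥ A⁻¹.mulVec z := by
  set u := B⁻¹.mulVec z with hu
  set w := A⁻¹.mulVec z with hw
  have hBu : B.mulVec u = z := by
    rw [hu, mulVec_mulVec, Matrix.mul_nonsing_inv _ hB.det_pos.ne'.isUnit, one_mulVec]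
  have hAw : A.mulVec w = z := by
    rw [hw, mulVec_mulVec, Matrix.mul_nonsing_inv _ hA.det_pos.ne'.isUnit, one_mulVec]
  have hpos : 0 ≤ (u - w) ⬝ᵥ A.mulVec (u - w) := by
    have := hA.posSemidef.dotProduct_mulVec_nonneg (u - w)
    simpa using this
  have hexp : (u - w) ⬝ᵥ A.mulVec (u - w)
      = u ⬝ᵥ A.mulVec u - u ⬝ᵥ A.mulVec w - w ⬝ᵥ A.mulVec u + w ⬝ᵥ A.mulVec w := by
    simp [sub_dotProduct, dotProduct_sub, mulVec_sub]
    ring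
  have h1 : u ⬝ᵥ A.mulVec w = u ⬝ᵥ z := by rw [hAw]
  have h2 : w ⬝ᵥ A.mulVec w = w ⬝ᵥ z := by rw [hAw]
  have h3 : w ⬝ᵥ A.mulVec u = u ⬝ᵥ z := by rw [aux_dot_symm hA.1, hAw]
  have h4 : u ⬝ᵥ A.mulVec u ≤ u ⬝ᵥ z := by
    have := h u
    rw [hBu] at this
    exact this
  have h5 : z ⬝ᵥ u = u ⬝ᵥ z := dotProduct_comm _ _
  have h6 : z ⬝ᵥ w = w ⬝ᵥ z := dotProduct_comm _ _
  rw [h5, h6]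
  rw [hexp, h1, h2, h3] at hpos
  linarith

/-- Upper eigenvalue bound for `Shatγ⁻¹ * Sγ` (Lemma 3.1, upper bound, first term). -/
theorem stmt_2 {n : ℕ} (S Shat W : Matrix (Fin n) (Fin n) ℝ)
    (hS : S.PosDef) (hShat : Shat.PosDef) (hW : W.PosDef)
    (C D e : ℝ) (hC : 0 < C) (hD : 0 < D) (he : 0 < e)
    (h1 : ∀ x : Fin n → ℝ, x ⬝ᵥ S.mulVec x ≤ C * (x ⬝ᵥ Shat.mulVec x))
    (h2 : ∀ x : Fin n → ℝ, x ⬝ᵥ S.mulVec x ≤ D * (x ⬝ᵥ W.mulVec x))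
    (h3 : ∀ x : Fin n → ℝ, e * (x ⬝ᵥ W.mulVec x) ≤ x ⬝ᵥ Shat.mulVec x)
    (γ : ℝ) (hγ : 0 ≤ γ)
    (Sγ Shatγ : Matrix (Fin n) (Fin n) ℝ)
    (hSγ : Sγ = (S⁻¹ + γ • W⁻¹)⁻¹) (hShatγ : Shatγ = (Shat⁻¹ + γ • W⁻¹)⁻¹)
    (lam : ℝ) (x : Fin n → ℝ) (hx : x ≠ 0)
    (heig : (Shatγ⁻¹ * Sγ).mulVec x = lam • x) :
    lam ≤ C / (1 + γ * C * e) + γ * D / (1 + γ * D) := by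
  set M := S⁻¹ + γ • W⁻¹ with hM
  set N := Shat⁻¹ + γ • W⁻¹ with hN
  have hMpd : M.PosDef := aux_posdef_add hS.inv (aux_psd_smul hW.inv.posSemidef hγ)
  have hNpd : N.PosDef := aux_posdef_add hShat.inv (aux_psd_smul hW.inv.posSemidef hγ)
  -- rewrite the eigen equation
  have hShatγinv : Shatγ⁻¹ = N := by
    rw [hShatγ, Matrix.nonsing_inv_nonsing_inv _ hNpd.det_pos.ne'.isUnit]
  set z := M⁻¹.mulVec x with hz
  have hMz : M.mulVec z = x := by
    rw [hz, mulVec_mulVec, Matrix.mul_nonsing_inv _ hMpd.det_pos.ne'.isUnit, one_mulVec]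
  have hz0 : z ≠ 0 := by
    intro h0
    apply hx
    rw [← hMz, h0, mulVec_zero]
  have heig' : N.mulVec z = lam • x := by
    rw [← heig, hShatγinv, hSγ, hz, mulVec_mulVec]
  -- quadratic forms
  set a := z ⬝ᵥ S⁻¹.mulVec z with ha
  set b := z ⬝ᵥ Shat⁻¹.mulVec z with hb
  set w := z ⬝ᵥ W⁻¹.mulVec z with hwdef
  have hMq : z ⬝ᵥ M.mulVec z = a + γ * w := by
    simp [hM, add_mulVec, dotProduct_add, smul_mulVec, ha, hwdef]
  have hNq : z ⬝ᵥ N.mulVec z = b + γ * w := by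
    simp [hN, add_mulVec, dotProduct_add, smul_mulVec, hb, hwdef]
  have hapos : 0 < a := by
    have := hS.inv.dotProduct_mulVec_pos hz0
    simpa [ha] using this
  have hwnn : 0 ≤ w := by
    have := hW.inv.posSemidef.dotProduct_mulVec_nonneg z
    simpa [hwdef] using this
  have hbnn : 0 ≤ b := by
    have := hShat.inv.posSemidef.dotProduct_mulVec_nonneg z
    simpa [hb] using this
  -- the key comparison inequalities via inverse-form lemma
  have hCS : (C • Shat)⁻¹ = C⁻¹ • Shat⁻¹ := by
    apply Matrix.inv_eq_right_inv
    rw [smul_mul_smul_comm, Matrix.mul_nonsing_inv _ hShat.det_pos.ne'.isUnit,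
      mul_inv_cancel₀ hC.ne', one_smul]
  have hDW : (D • W)⁻¹ = D⁻¹ • W⁻¹ := by
    apply Matrix.inv_eq_right_inv
    rw [smul_mul_smul_comm, Matrix.mul_nonsing_inv _ hW.det_pos.ne'.isUnit,
      mul_inv_cancel₀ hD.ne', one_smul]
  have heW : (e • W)⁻¹ = e⁻¹ • W⁻¹ := by
    apply Matrix.inv_eq_right_inv
    rw [smul_mul_smul_comm, Matrix.mul_nonsing_inv _ hW.det_pos.ne'.isUnit,
      mul_inv_cancel₀ he.ne', one_smul]
  have i1 : b ≤ C * a := by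
    have := aux_inv_quad_le S (C • Shat) hS (aux_pd_smul hShat hC)
      (fun y => by simpa [smul_mulVec] using h1 y) z
    rw [hCS] at this
    simp only [smul_mulVec, dotProduct_smul, smul_eq_mul, ← hb, ← ha] at this
    calc b = C * (C⁻¹ * b) := by field_simp
    _ ≤ C * a := by
      apply mul_le_mul_of_nonneg_left this hC.le
  have i2 : w ≤ D * a := by
    have := aux_inv_quad_le S (D • W) hS (aux_pd_smul hW hD)
      (fun y => by simpa [smul_mulVec] using h2 y) z
    rw [hDW] at this
    simp only [smul_mulVec, dotProduct_smul, smul_eq_mul, ← hwdef, ← ha] at this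
    calc w = D * (D⁻¹ * w) := by field_simp
    _ ≤ D * a := by
      apply mul_le_mul_of_nonneg_left this hD.le
  have i3 : e * b ≤ w := by
    have := aux_inv_quad_le (e • W) Shat (aux_pd_smul hW he) hShat
      (fun y => by simpa [smul_mulVec] using h3 y) z
    rw [heW] at this
    simp only [smul_mulVec, dotProduct_smul, smul_eq_mul, ← hwdef, ← hb] at this
    calc e * b ≤ e * (e⁻¹ * w) := mul_le_mul_of_nonneg_left this he.le
    _ = w := by field_simp
  -- eigenvalue as Rayleigh quotient
  have hray : b + γ * w = lam * (a + γ * w) := by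
    have : z ⬝ᵥ N.mulVec z = lam * (z ⬝ᵥ M.mulVec z) := by
      rw [heig', dotProduct_smul, smul_eq_mul, hMz]
    rw [hMq, hNq] at this
    exact this
  have hden : 0 < a + γ * w := by positivity
  have hd1 : 0 < 1 + γ * C * e := by positivity
  have hd2 : 0 < 1 + γ * D := by positivity
  -- final scalar inequality
  have key : b + γ * w ≤ (C / (1 + γ * C * e) + γ * D / (1 + γ * D)) * (a + γ * w) := by
    have k1 : b ≤ C / (1 + γ * C * e) * (a + γ * w) := by
      rw [div_mul_eq_mul_div, le_div_iff₀ hd1]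
      nlinarith [mul_nonneg hγ (mul_nonneg hC.le (sub_nonneg.mpr i3))]
    have k2 : γ * w ≤ γ * D / (1 + γ * D) * (a + γ * w) := by
      rw [div_mul_eq_mul_div, le_div_iff₀ hd2]
      nlinarith [mul_nonneg hγ (sub_nonneg.mpr i2)]
    nlinarith [k1, k2]
  have := hray ▸ key
  exact le_of_mul_le_mul_right (by linarith) hden
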